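/- Let E be a Banach space. If E with the weak topology has the strong Pytkeev property, then E is finite-dimensional. -/

import Mathlib

open Filter Topology Set

/-- `X` has the strong Pytkeev property at `x`. -/
def StrongPytkeevAt (X : Type*) [TopologicalSpace X] (x : X) : Prop :=
  ∃ D : Set (Set X), D.Countable ∧
    ∀ U ∈ nhds x, ∀ A : Set X, x ∈ closure A \ A →
      ∃ N ∈ D, N ⊆ U ∧ (N ∩ A).Infinite

namespace PytkeevAux

variable {E : Type*} [NormedAddCommGroup E] [NormedSpace ℝ E]


variable {E : Type*} [NormedAddCommGroup E] [NormedSpace ℝ E]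

/-- Basic weak neighborhood of `0`. -/
def Sball (s : Finset (E →L[ℝ] ℝ)) (ε : ℝ) : Set (WeakSpace ℝ E) :=
  {x | ∀ f ∈ s, |f x| < ε}

lemma eval_zero (f : E →L[ℝ] ℝ) : f (0 : WeakSpace ℝ E) = 0 := map_zero f

lemma sball_mem_nhds (s : Finset (E →L[ℝ] ℝ)) {ε : ℝ} (hε : 0 < ε) :
    Sball s ε ∈ 𝓝 (0 : WeakSpace ℝ E) := by
  have hopen : IsOpen (Sball (E := E) s ε) := by
    have heq : Sball (E := E) s ε = ⋂ f ∈ s, {x : WeakSpace ℝ E | |f x| < ε} := by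
      ext x; simp [Sball]
    rw [heq]
    refine isOpen_biInter_finset fun f _ => ?_
    have hc : Continuous fun x : WeakSpace ℝ E => |f x| :=
      continuous_abs.comp (WeakBilin.eval_continuous ((topDualPairing ℝ E).flip) f)
    exact isOpen_lt hc continuous_const
  refine hopen.mem_nhds fun f _ => ?_
  rw [eval_zero f]
  simpa using hε

lemma exists_sball_subset {V : Set (WeakSpace ℝ E)} (hV : V ∈ 𝓝 (0 : WeakSpace ℝ E)) :
    ∃ (s : Finset (E →L[ℝ] ℝ)) (ε : ℝ), 0 < ε ∧ Sball s ε ⊆ V := by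
  have h1 : 𝓝 (0 : WeakSpace ℝ E) =
      Filter.comap (fun (x : WeakSpace ℝ E) (f : E →L[ℝ] ℝ) => (topDualPairing ℝ E).flip x f)
        (𝓝 (fun f : E →L[ℝ] ℝ => (topDualPairing ℝ E).flip (0 : WeakSpace ℝ E) f)) :=
    nhds_induced _ _
  rw [h1, Filter.mem_comap] at hV
  obtain ⟨t, ht, htV⟩ := hV
  rw [nhds_pi, Filter.mem_pi] at ht
  obtain ⟨I, hIfin, tt, htt, hpi⟩ := ht
  have key : ∀ f : E →L[ℝ] ℝ, ∃ δ : ℝ, 0 < δ ∧ (f ∈ I → Metric.ball (0 : ℝ) δ ⊆ tt f) := by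
    intro f
    by_cases hf : f ∈ I
    · have h0 : tt f ∈ 𝓝 (0 : ℝ) := by
        have : (fun g : E →L[ℝ] ℝ => (topDualPairing ℝ E).flip (0 : WeakSpace ℝ E) g) f
            = (0 : ℝ) := map_zero f
        rw [← this]; exact htt f
      obtain ⟨δ, hδ, hball⟩ := Metric.mem_nhds_iff.1 h0
      exact ⟨δ, hδ, fun _ => hball⟩
    · exact ⟨1, one_pos, fun hf' => absurd hf' hf⟩
  choose δ hδpos hδball using key
  set s : Finset (E →L[ℝ] ℝ) := hIfin.toFinset with hs
  obtain ⟨ε, hεpos, hεle⟩ : ∃ ε : ℝ, 0 < ε ∧ ∀ f ∈ s, ε ≤ δ f := by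
    rcases s.eq_empty_or_nonempty with hse | hse
    · exact ⟨1, one_pos, by simp [hse]⟩
    · refine ⟨min 1 ((s.image δ).min' (hse.image δ)), ?_, ?_⟩
      · refine lt_min one_pos ?_
        obtain ⟨f, hf, hfeq⟩ := Finset.mem_image.1 ((s.image δ).min'_mem (hse.image δ))
        rw [← hfeq]; exact hδpos f
      · intro f hf
        exact le_trans (min_le_right _ _)
          (Finset.min'_le _ _ (Finset.mem_image_of_mem δ hf))
  refine ⟨s, ε, hεpos, fun x hx => ?_⟩
  apply htV
  refine hpi ?_
  intro f hf
  have hfs : f ∈ s := by rw [hs]; exact hIfin.mem_toFinset.2 hf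
  have hlt : |f x| < ε := hx f hfs
  have : (topDualPairing ℝ E).flip x f ∈ Metric.ball (0 : ℝ) (δ f) := by
    rw [mem_ball_zero_iff, Real.norm_eq_abs]
    exact lt_of_lt_of_le hlt (hεle f hfs)
  exact hδball f hf this

lemma mem_closure_iff' {A : Set (WeakSpace ℝ E)} :
    (0 : WeakSpace ℝ E) ∈ closure A ↔
      ∀ (s : Finset (E →L[ℝ] ℝ)) (ε : ℝ), 0 < ε → ∃ a ∈ A, ∀ f ∈ s, |f a| < ε := by
  rw [mem_closure_iff_nhds]
  constructor
  · intro h s ε hε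
    obtain ⟨a, ha1, ha2⟩ := h (Sball s ε) (sball_mem_nhds s hε)
    exact ⟨a, ha2, ha1⟩
  · intro h t ht
    obtain ⟨s, ε, hε, hsub⟩ := exists_sball_subset ht
    obtain ⟨a, haA, ha⟩ := h s ε hε
    exact ⟨a, hsub ha, haA⟩




lemma exists_ker (hfd : ¬ FiniteDimensional ℝ E) (s : Finset (E →L[ℝ] ℝ)) :
    ∃ x : E, x ≠ 0 ∧ ∀ f ∈ s, f x = 0 := by
  by_contra hc
  push_neg at hc
  apply hfd
  let Φ : E →ₗ[ℝ] (s → ℝ) :=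
    LinearMap.pi fun f => ((f : E →L[ℝ] ℝ) : E →ₗ[ℝ] ℝ)
  refine FiniteDimensional.of_injective Φ fun x y hxy => ?_
  by_contra hne
  obtain ⟨f, hfs, hfx⟩ := hc (x - y) (sub_ne_zero.2 hne)
  apply hfx
  have h1 : Φ x ⟨f, hfs⟩ = Φ y ⟨f, hfs⟩ := by rw [hxy]
  have h2 : f x = f y := h1
  rw [map_sub, h2, sub_self]


lemma exists_large (hfd : ¬ FiniteDimensional ℝ E) (s : Finset (E →L[ℝ] ℝ)) {ε : ℝ}
    (hε : 0 < ε) (R : ℝ) :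
    ∃ y : WeakSpace ℝ E, y ∈ Sball s ε ∧ R < ‖show E from y‖ := by
  obtain ⟨x, hx0, hxker⟩ := exists_ker hfd s
  have hxn : (0 : ℝ) < ‖x‖ := norm_pos_iff.2 hx0
  refine ⟨((|R| + 1) / ‖x‖) • x, ?_, ?_⟩
  · intro f hf
    have : f (((|R| + 1) / ‖x‖) • x) = ((|R| + 1) / ‖x‖) * f x := map_smul f _ x
    rw [show f ((((|R| + 1) / ‖x‖) • x : E) : WeakSpace ℝ E) = ((|R| + 1) / ‖x‖) * f x from this,
      hxker f hf, mul_zero]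
    simpa using hε
  · have : ‖((|R| + 1) / ‖x‖) • x‖ = ((|R| + 1) / ‖x‖) * ‖x‖ := by
      rw [norm_smul, Real.norm_eq_abs, abs_of_pos (by positivity)]
    rw [show ‖show E from (((|R| + 1) / ‖x‖) • x : E)‖ = ((|R| + 1) / ‖x‖) * ‖x‖ from this,
      div_mul_cancel₀ _ (ne_of_gt hxn)]
    calc R ≤ |R| := le_abs_self R
    _ < |R| + 1 := lt_add_one _

lemma exists_large_nhds (hfd : ¬ FiniteDimensional ℝ E) {V : Set (WeakSpace ℝ E)}
    (hV : V ∈ 𝓝 (0 : WeakSpace ℝ E)) (R : ℝ) :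
    ∃ y : WeakSpace ℝ E, y ∈ V ∧ R < ‖show E from y‖ := by
  obtain ⟨s, ε, hε, hsub⟩ := exists_sball_subset hV
  obtain ⟨y, hy1, hy2⟩ := exists_large hfd s hε R
  exact ⟨y, hsub hy1, hy2⟩

lemma sball_mem_nhds_set (s : Finset (E →L[ℝ] ℝ)) {ε : ℝ} (hε : 0 < ε) :
    {x : WeakSpace ℝ E | ∀ f ∈ s, |f x| < ε} ∈ 𝓝 (0 : WeakSpace ℝ E) :=
  sball_mem_nhds s hε



/-- Countable fan tightness of the weak topology at `0`. -/
lemma cft (A : ℕ → Set (WeakSpace ℝ E))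
    (hA : ∀ n, (0 : WeakSpace ℝ E) ∈ closure (A n)) :
    ∃ F : ℕ → Set (WeakSpace ℝ E), (∀ n, F n ⊆ A n) ∧ (∀ n, (F n).Finite) ∧
      (0 : WeakSpace ℝ E) ∈ closure (⋃ n, F n) := by
  classical
  have stage : ∀ k : ℕ, ∃ Fk : Set (WeakSpace ℝ E), Fk ⊆ A k ∧ Fk.Finite ∧
      ∀ G : Fin (Nat.pairEquiv.symm k).1 → (E →L[ℝ] ℝ),
        (∀ i, ‖G i‖ ≤ ((Nat.pairEquiv.symm k).2 : ℝ)) →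
        ∃ a ∈ Fk, ∀ i, |G i a| < 1 / ((Nat.pairEquiv.symm k).1 + 1) := by
    intro k
    set n : ℕ := (Nat.pairEquiv.symm k).1 with hn
    set m : ℕ := (Nat.pairEquiv.symm k).2 with hm
    set δ : ℝ := 1 / (n + 1) with hδdef
    have hδpos : 0 < δ := by positivity
    -- compact set
    set K : Set (WeakDual ℝ E) := WeakDual.toStrongDual ⁻¹' Metric.closedBall 0 m with hK
    have hKcomp : IsCompact K := WeakDual.isCompact_closedBall (𝕜 := ℝ) 0 m
    set C : Set (Fin n → WeakDual ℝ E) := Set.pi univ (fun _ => K) with hC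
    have hCcomp : IsCompact C := isCompact_univ_pi fun _ => hKcomp
    -- open cover
    set W : ↥(A k) → Set (Fin n → WeakDual ℝ E) :=
      fun a => {G | ∀ i, |(G i) (show E from (a : WeakSpace ℝ E))| < δ} with hW
    have hWopen : ∀ a, IsOpen (W a) := by
      intro a
      have : W a = ⋂ i, (fun G : Fin n → WeakDual ℝ E =>
          (G i) (show E from (a : WeakSpace ℝ E))) ⁻¹' {r : ℝ | |r| < δ} := by
        ext G; simp [hW]
      rw [this]
      refine isOpen_iInter_of_finite fun i => ?_
      refine IsOpen.preimage ?_ ?_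
      · exact (WeakBilin.eval_continuous (topDualPairing ℝ E) _).comp (continuous_apply i)
      · exact isOpen_lt continuous_abs continuous_const
    have hcover : C ⊆ ⋃ a, W a := by
      intro G _
      obtain ⟨a, haA, hsmall⟩ := (mem_closure_iff'.1 (hA k))
        (Finset.image (fun i => WeakDual.toStrongDual (G i)) Finset.univ) δ hδpos
      refine mem_iUnion.2 ⟨⟨a, haA⟩, fun i => ?_⟩
      exact hsmall _ (Finset.mem_image_of_mem _ (Finset.mem_univ i))
    obtain ⟨t, ht⟩ := hCcomp.elim_finite_subcover W hWopen hcover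
    refine ⟨(fun a : ↥(A k) => (a : WeakSpace ℝ E)) '' ↑t, ?_, ?_, ?_⟩
    · rintro x ⟨a, _, rfl⟩; exact a.2
    · exact (t.finite_toSet).image _
    · intro G hG
      have hGC : (fun i => (G i : WeakDual ℝ E)) ∈ C := by
        intro i _
        show WeakDual.toStrongDual (G i) ∈ Metric.closedBall 0 (m : ℝ)
        rw [Metric.mem_closedBall, dist_zero_right]
        exact hG i
      obtain ⟨a, hat, haW⟩ := mem_iUnion₂.1 (ht hGC)
      exact ⟨a, ⟨a, hat, rfl⟩, haW⟩
  choose F hFA hFfin hFprop using stage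
  refine ⟨F, hFA, hFfin, ?_⟩
  rw [mem_closure_iff']
  intro s ε hε
  obtain ⟨n₀, hn₀⟩ := exists_nat_one_div_lt hε
  set n : ℕ := max n₀ s.card with hn
  have hδε : 1 / ((n : ℝ) + 1) < ε := by
    refine lt_of_le_of_lt ?_ hn₀
    have : (n₀ : ℝ) + 1 ≤ (n : ℝ) + 1 := by
      have : (n₀ : ℝ) ≤ n := by exact_mod_cast le_max_left _ _
      linarith
    exact one_div_le_one_div_of_le (by positivity) this
  obtain ⟨M, hM⟩ := Finset.exists_le (s.image fun f => ‖f‖)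
  obtain ⟨m, hm⟩ := exists_nat_ge M
  set k : ℕ := Nat.pairEquiv (n, m) with hk
  have hnk : (Nat.pairEquiv.symm k).1 = n := by rw [hk, Equiv.symm_apply_apply]
  have hmk : (Nat.pairEquiv.symm k).2 = m := by rw [hk, Equiv.symm_apply_apply]
  set G : Fin n → (E →L[ℝ] ℝ) := fun i => s.toList.getD i 0 with hG
  have hGmem : ∀ i : Fin n, G i = 0 ∨ G i ∈ s := by
    intro i
    by_cases hi : (i : ℕ) < s.toList.length
    · right
      rw [hG]
      simp only [List.getD_eq_getElem?_getD]
      rw [List.getElem?_eq_getElem hi]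
      exact Finset.mem_toList.1 (by simpa using List.getElem_mem hi)
    · left
      rw [hG]
      simp only [List.getD_eq_getElem?_getD]
      rw [List.getElem?_eq_none (le_of_not_gt hi)]
      rfl
  have hGnorm : ∀ i, ‖G i‖ ≤ (m : ℝ) := by
    intro i
    rcases hGmem i with h0 | hs'
    · rw [h0]; simp [Nat.cast_nonneg]
    · exact le_trans (hM _ (Finset.mem_image_of_mem _ hs')) hm
  -- transport G along hnk/hmk
  have hGnorm' : ∀ i : Fin (Nat.pairEquiv.symm k).1,
      ‖G (Fin.cast hnk i)‖ ≤ (((Nat.pairEquiv.symm k).2 : ℕ) : ℝ) := by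
    intro i; rw [hmk]; exact hGnorm _
  obtain ⟨a, haF, hasmall⟩ := hFprop k (fun i => G (Fin.cast hnk i)) hGnorm'
  refine ⟨a, mem_iUnion.2 ⟨k, haF⟩, ?_⟩
  intro f hf
  -- f appears in the list
  have hfl : f ∈ s.toList := Finset.mem_toList.2 hf
  obtain ⟨j, hj, hfj⟩ := List.mem_iff_getElem.1 hfl
  have hjn : j < n := lt_of_lt_of_le (by simpa using hj) (le_max_right n₀ s.card)
  have hfG : G ⟨j, hjn⟩ = f := by
    rw [hG]
    simp only [List.getD_eq_getElem?_getD]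
    rw [List.getElem?_eq_getElem hj]
    simpa using hfj
  have hjk : (j : ℕ) < (Nat.pairEquiv.symm k).1 := by rw [hnk]; exact hjn
  have := hasmall ⟨j, hjk⟩
  rw [show G (Fin.cast hnk ⟨j, hjk⟩) = f from hfG] at this
  refine lt_trans this ?_
  rw [hnk]
  exact hδε



theorem main {E : Type*} [NormedAddCommGroup E] [NormedSpace ℝ E] [CompleteSpace E]
    (h : ∀ x : WeakSpace ℝ E, ∃ D : Set (Set (WeakSpace ℝ E)), D.Countable ∧
      ∀ U ∈ nhds x, ∀ A : Set (WeakSpace ℝ E), x ∈ closure A \ A →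
        ∃ N ∈ D, N ⊆ U ∧ (N ∩ A).Infinite) :
    FiniteDimensional ℝ E := by
  classical
  by_contra hfd
  obtain ⟨D, hDc, hD⟩ := h 0
  -- enumerate D (augmented with ∅ so it is nonempty)
  obtain ⟨e, he⟩ : ∃ e : ℕ → Set (WeakSpace ℝ E), insert ∅ D = range e :=
    (hDc.insert ∅).exists_eq_range (insert_nonempty _ _)
  have hP : ∀ U ∈ 𝓝 (0 : WeakSpace ℝ E), ∀ A : Set (WeakSpace ℝ E),
      (0 : WeakSpace ℝ E) ∈ closure A \ A → ∃ k, e k ⊆ U ∧ (e k ∩ A).Infinite := by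
    intro U hU A hA
    obtain ⟨N, hN, hNU, hNA⟩ := hD U hU A hA
    have : N ∈ range e := by rw [← he]; exact mem_insert_of_mem _ hN
    obtain ⟨k, rfl⟩ := this
    exact ⟨k, hNU, hNA⟩
  -- the candidate basic sets
  set B : Finset ℕ → Set (WeakSpace ℝ E) :=
    fun T => insert (0 : WeakSpace ℝ E) (⋃ k ∈ T, e k) with hB
  -- Claim 1: every nbhd of 0 contains a B T which is itself a nbhd of 0
  have claim1 : ∀ U ∈ 𝓝 (0 : WeakSpace ℝ E), ∃ T : Finset ℕ,
      (∀ k ∈ T, e k ⊆ U) ∧ B T ∈ 𝓝 (0 : WeakSpace ℝ E) := by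
    intro U hU
    by_contra hcon
    push_neg at hcon
    set T : ℕ → Finset ℕ := fun n => (Finset.range (n + 1)).filter (fun k => e k ⊆ U) with hT
    have hTgood : ∀ n, ∀ k ∈ T n, e k ⊆ U := by
      intro n k hk; exact (Finset.mem_filter.1 hk).2
    set A : ℕ → Set (WeakSpace ℝ E) := fun n => (B (T n))ᶜ with hA
    have hAcl : ∀ n, (0 : WeakSpace ℝ E) ∈ closure (A n) := by
      intro n
      rw [mem_closure_iff_nhds]
      intro V hV
      rcases eq_empty_or_nonempty (V ∩ A n) with hemp | hne
      · exfalso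
        apply hcon (T n) (hTgood n)
        refine mem_of_superset hV ?_
        intro x hx
        by_contra hxB
        exact (eq_empty_iff_forall_notMem.1 hemp) x ⟨hx, hxB⟩
      · exact hne
    obtain ⟨F, hFA, hFfin, hFcl⟩ := cft A hAcl
    set A' : Set (WeakSpace ℝ E) := ⋃ n, F n with hA'
    have h0A' : (0 : WeakSpace ℝ E) ∉ A' := by
      rw [hA', mem_iUnion]
      rintro ⟨n, hn⟩
      exact (hFA n hn) (mem_insert _ _)
    obtain ⟨k, hkU, hkinf⟩ := hP U hU A' ⟨hFcl, h0A'⟩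
    -- but e k ∩ A' is finite
    apply hkinf
    have hsub : e k ∩ A' ⊆ ⋃ n ∈ Finset.range k, F n := by
      rintro x ⟨hxe, hxA⟩
      rw [hA', mem_iUnion] at hxA
      obtain ⟨n, hn⟩ := hxA
      rcases lt_or_ge n k with hnk | hnk
      · exact mem_biUnion (Finset.mem_range.2 hnk) hn
      · exfalso
        have hkT : k ∈ T n := by
          rw [hT]
          exact Finset.mem_filter.2 ⟨Finset.mem_range.2 (Nat.lt_succ_of_le hnk), hkU⟩
        have : x ∈ B (T n) := by
          rw [hB]
          exact mem_insert_of_mem _ (mem_biUnion hkT hxe)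
        exact (hFA n hn) this
    exact Finite.subset (Set.Finite.biUnion (Finset.range k).finite_toSet fun n _ => hFfin n) hsub
  -- Countable base at 0
  set base : Set (Set (WeakSpace ℝ E)) := {V | (∃ T : Finset ℕ, V = B T) ∧ V ∈ 𝓝 0} with hbase
  have hbasec : base.Countable := by
    have : base ⊆ range B := by rintro V ⟨⟨T, rfl⟩, _⟩; exact mem_range_self T
    exact Countable.mono this (countable_range B)
  have hbasene : base.Nonempty := by
    obtain ⟨T, _, hT2⟩ := claim1 univ univ_mem
    exact ⟨B T, ⟨T, rfl⟩, hT2⟩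
  obtain ⟨V, hV⟩ := hbasec.exists_eq_range hbasene
  have hVnhds : ∀ n, V n ∈ 𝓝 (0 : WeakSpace ℝ E) := by
    intro n
    have : V n ∈ base := by rw [hV]; exact mem_range_self n
    exact this.2
  have hVbase : ∀ U ∈ 𝓝 (0 : WeakSpace ℝ E), ∃ n, V n ⊆ U := by
    intro U hU
    obtain ⟨T, hT1, hT2⟩ := claim1 U hU
    have hmem : B T ∈ base := ⟨⟨T, rfl⟩, hT2⟩
    rw [hV] at hmem
    obtain ⟨n, hn⟩ := hmem
    refine ⟨n, ?_⟩
    rw [hn]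
    exact insert_subset (mem_of_mem_nhds hU) (iUnion₂_subset hT1)
  -- decreasing intersections and the unbounded sequence
  set W : ℕ → Set (WeakSpace ℝ E) := fun n => ⋂ m ∈ Finset.range (n + 1), V m with hW
  have hWnhds : ∀ n, W n ∈ 𝓝 (0 : WeakSpace ℝ E) := by
    intro n
    exact (Filter.biInter_mem (Finset.range (n + 1)).finite_toSet).2 fun m _ => hVnhds m
  have hy : ∀ n : ℕ, ∃ y : WeakSpace ℝ E, y ∈ W n ∧ (n : ℝ) < ‖show E from y‖ :=
    fun n => exists_large_nhds hfd (hWnhds n) n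
  choose y hyW hyn using hy
  -- pointwise boundedness
  have hpb : ∀ f : E →L[ℝ] ℝ, ∃ C : ℝ, ∀ n, |f (y n)| ≤ C := by
    intro f
    have hVf : {x : WeakSpace ℝ E | ∀ g ∈ ({f} : Finset (E →L[ℝ] ℝ)), |g x| < 1} ∈
        𝓝 (0 : WeakSpace ℝ E) := sball_mem_nhds_set {f} one_pos
    obtain ⟨n₀, hn₀⟩ := hVbase _ hVf
    obtain ⟨M, hM⟩ := Finset.exists_le ((Finset.range (n₀ + 1)).image fun n => |f (y n)|)
    refine ⟨max M 1, fun n => ?_⟩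
    rcases le_or_gt n n₀ with hn | hn
    · exact le_trans (hM _ (Finset.mem_image_of_mem _ (Finset.mem_range.2 (Nat.lt_succ_of_le hn))))
        (le_max_left _ _)
    · have : y n ∈ V n₀ := by
        have := hyW n
        rw [hW] at this
        exact Set.mem_iInter₂.1 this n₀ (Finset.mem_range.2 (Nat.lt_succ_of_le hn.le))
      have := hn₀ this f (Finset.mem_singleton_self f)
      exact le_trans this.le (le_max_right _ _)
  -- Banach–Steinhaus
  set g : ℕ → (StrongDual ℝ E) →L[ℝ] ℝ :=
    fun n => NormedSpace.inclusionInDoubleDual ℝ E (show E from y n) with hg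
  have hgb : ∀ f : StrongDual ℝ E, ∃ C : ℝ, ∀ n, ‖g n f‖ ≤ C := by
    intro f
    obtain ⟨C, hC⟩ := hpb f
    refine ⟨C, fun n => ?_⟩
    rw [hg]
    show ‖f (show E from y n)‖ ≤ C
    rw [Real.norm_eq_abs]
    exact hC n
  obtain ⟨C', hC'⟩ := banach_steinhaus hgb
  obtain ⟨n, hn⟩ := exists_nat_gt C'
  have hnorm : ‖g n‖ = ‖show E from y n‖ := by
    rw [hg]
    exact (NormedSpace.inclusionInDoubleDualLi ℝ (E := E)).norm_map _
  have := hC' n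
  rw [hnorm] at this
  exact absurd (lt_of_lt_of_le (lt_trans hn (hyn n)) this) (lt_irrefl _)

end PytkeevAux

/-- Corollary 2.2 (for Banach spaces): if a Banach space with the weak topology has the strong
Pytkeev property, then it is finite-dimensional. -/
theorem finiteDimensional_of_weak_strongPytkeev
    {E : Type*} [NormedAddCommGroup E] [NormedSpace ℝ E] [CompleteSpace E]
    (h : ∀ x : WeakSpace ℝ E, StrongPytkeevAt (WeakSpace ℝ E) x) :
    FiniteDimensional ℝ E :=
  PytkeevAux.main fun x => h x
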